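/- Let M be a [0,1]-module with a countable dual basis (e_i, φ_i)_{i∈I} such that e_i ≠ 0 and φ_i ≠ 0 for every i ∈ I. Call a subset J ⊆ I closed if j ∈ J and φ_i(e_j) ≠ 0 imply i ∈ J. If J ⊆ I is closed, then I ∖ J is closed. -/

import Mathlib

/-- A Σ-monoid: a set with a partial countable sum, represented via `Option`. -/
structure SigmaMonoid (M : Type) where
  zero : M
  sum : (ℕ → M) → Option M
  sum_unit : ∀ (x : ℕ → M) (j : ℕ), (∀ i, i ≠ j → x i = zero) → sum x = some (x j)
  sum_perm : ∀ (I J : Set ℕ) (σ : ↥(Iᶜ) ≃ ↥(Jᶜ)) (x y : ℕ → M),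
      (∀ i ∈ I, x i = zero) → (∀ j ∈ J, y j = zero) →
      (∀ i : ↥(Iᶜ), x i.1 = y (σ i).1) → sum x = sum y
  sum_assoc : ∀ (σ : ℕ × ℕ ≃ ℕ) (x s : ℕ → M),
      (∀ j, sum (fun k => x (σ (j, k))) = some (s j)) → sum x = sum s
  sum_assoc_inner : ∀ (σ : ℕ × ℕ ≃ ℕ) (x : ℕ → M) (v : M),
      sum x = some v → ∀ j, ∃ w, sum (fun k => x (σ (j, k))) = some w

/-- The (partial) binary sum `x + y`, i.e. the sum of the family `(x, y, 0, 0, …)`. -/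
def SigmaMonoid.add {M : Type} (S : SigmaMonoid M) (x y : M) : Option M :=
  S.sum (fun n => if n = 0 then x else if n = 1 then y else S.zero)

/-- A Σ-monoid homomorphism. -/
def SigmaHom {M N : Type} (S : SigmaMonoid M) (T : SigmaMonoid N) (f : M → N) : Prop :=
  f S.zero = T.zero ∧
  ∀ (x : ℕ → M) (v : M), S.sum x = some v → T.sum (fun i => f (x i)) = some (f v)

/-- A Σ-semiring: a Σ-monoid with a total commutative multiplication distributing
over the partial sums. -/
structure SigmaSemiring (R : Type) extends SigmaMonoid R where
  one : R
  mul : R → R → R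
  mul_assoc' : ∀ a b c, mul (mul a b) c = mul a (mul b c)
  mul_comm' : ∀ a b, mul a b = mul b a
  one_mul' : ∀ a, mul one a = a
  zero_mul' : ∀ a, mul zero a = zero
  mul_sum : ∀ (e : ℕ ≃ ℕ × ℕ) (r s : ℕ → R) (a b : R),
      sum r = some a → sum s = some b →
      sum (fun n => mul (r (e n).1) (s (e n).2)) = some (mul a b)

/-- A module over a Σ-semiring. -/
structure SigmaModule (R : Type) (S : SigmaSemiring R) (M : Type) extends SigmaMonoid M where
  smul : R → M → M
  one_smul' : ∀ x, smul S.one x = x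
  mul_smul' : ∀ r s x, smul (S.mul r s) x = smul r (smul s x)
  zero_smul' : ∀ x, smul S.zero x = zero
  smul_zero' : ∀ r, smul r zero = zero
  smul_sum : ∀ (e : ℕ ≃ ℕ × ℕ) (r : ℕ → R) (x : ℕ → M) (a : R) (b : M),
      S.sum r = some a → sum x = some b →
      sum (fun n => smul (r (e n).1) (x (e n).2)) = some (smul a b)

/-- An `R`-linear map between `R`-modules. -/
def RLinear {R M N : Type} (S : SigmaSemiring R)
    (MM : SigmaModule R S M) (NN : SigmaModule R S N) (f : M → N) : Prop :=
  f MM.zero = NN.zero ∧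
  (∀ (x : ℕ → M) (v : M), MM.sum x = some v → NN.sum (fun i => f (x i)) = some (f v)) ∧
  (∀ r x, f (MM.smul r x) = NN.smul r (f x))

/-- The unit interval `[0,1]`, as a subtype of the nonnegative reals. -/
def UnitI : Type := {r : NNReal // r ≤ 1}

def uZero : UnitI := ⟨0, zero_le_one⟩

def uOne : UnitI := ⟨1, le_refl 1⟩

def uMul (a b : UnitI) : UnitI :=
  ⟨a.1 * b.1, by
    calc a.1 * b.1 ≤ 1 * 1 := mul_le_mul' a.2 b.2
    _ = 1 := one_mul 1⟩

open Classical in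
/-- The partial sum on `[0,1]`: `Σ_i r_i` is defined iff the series converges
to a value `≤ 1`, in which case that value is the sum. -/
noncomputable def uSum (r : ℕ → UnitI) : Option UnitI :=
  if h : (∑' i, ((r i).1 : ENNReal)) ≤ 1 then
    some ⟨(∑' i, ((r i).1 : ENNReal)).toNNReal, by
      have hne : (∑' i, ((r i).1 : ENNReal)) ≠ ⊤ :=
        ne_top_of_le_ne_top ENNReal.one_ne_top h
      exact ENNReal.coe_le_coe.mp
        (by rw [ENNReal.coe_toNNReal hne]; exact_mod_cast h)⟩
  else none

open Classical in
/-- `sumIdx S f v` says that the sum of the countable family `f`, taken along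
an enumeration of its index set padded with zeros (which is independent of the
enumeration by the permutation axiom), is defined and equals `v`. -/
def sumIdx {M : Type} (S : SigmaMonoid M) {ι : Type} (f : ι → M) (v : M) : Prop :=
  ∃ e : ι ↪ ℕ,
    S.sum (fun n => if h : ∃ i, e i = n then f h.choose else S.zero) = some v

/-- A `[0,1]`-linear map from a `[0,1]`-module to `[0,1]` itself. -/
def UnitLinearMap (U : SigmaSemiring UnitI) {M : Type}
    (MM : SigmaModule UnitI U M) (φ : M → UnitI) : Prop :=
  φ MM.zero = U.zero ∧
  (∀ (x : ℕ → M) (v : M), MM.sum x = some v →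
    U.sum (fun i => φ (x i)) = some (φ v)) ∧
  (∀ (r : UnitI) (x : M), φ (MM.smul r x) = U.mul r (φ x))

/-- A countable dual basis `(e_i, φ_i)_{i ∈ ι}` of a `[0,1]`-module:
each `φ_i` is `[0,1]`-linear and `x = Σ_{i∈ι} φ_i(x)·e_i` for every `x`. -/
def IsDualBasis (U : SigmaSemiring UnitI) {M ι : Type}
    (MM : SigmaModule UnitI U M) (e : ι → M) (φ : ι → M → UnitI) : Prop :=
  (∀ i, UnitLinearMap U MM (φ i)) ∧
  ∀ x : M, sumIdx MM.toSigmaMonoid (fun i => MM.smul (φ i x) (e i)) x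


open scoped ENNReal
open Classical

lemma matrix_symm {ι : Type} (a : ι → ι → ℝ≥0∞)
    (hle : ∀ k j, a k j ≤ 1)
    (ha : ∀ k j, (∑' p, a k p * a p j) = a k j)
    (i j : ι) (hij : a i j ≠ 0)
    (hcol : ∃ k, a k i ≠ 0) (hrow : ∃ m, a j m ≠ 0) :
    a j i ≠ 0 := by
  intro hji
  obtain ⟨k0, hk0⟩ := hcol
  obtain ⟨m, hm⟩ := hrow
  have L0 : ∀ p, a j p * a p i = 0 := by
    have := ha j i
    rw [hji] at this
    exact fun p => (ENNReal.tsum_eq_zero.mp this) p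
  set c : ℝ≥0∞ := a i j * a j m with hc
  have hcne : c ≠ 0 := mul_ne_zero hij hm
  set F : (ι → ℝ≥0∞) → (ι → ℝ≥0∞) :=
    fun y k => ∑' p, (if a p i ≠ 0 then a k p * y p else 0) with hF
  set w : ι → ℝ≥0∞ := fun k => a k i with hw
  set x : ι → ℝ≥0∞ := fun k => a k m with hx
  have L1 : ∀ k, F w k = w k := by
    intro k
    have h1 : ∀ p, (if a p i ≠ 0 then a k p * w p else 0) = a k p * a p i := by
      intro p
      by_cases h : a p i ≠ 0
      · simp [h, hw]
      · push_neg at h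
        simp [h]
    simp only [hF]
    rw [tsum_congr h1, ha k i]
  have Ladd : ∀ (y : ι → ℝ≥0∞) (d : ℝ≥0∞) (k : ι),
      F (fun p => y p + d * w p) k = F y k + d * w k := by
    intro y d k
    have h1 : ∀ p, (if a p i ≠ 0 then a k p * (y p + d * w p) else 0)
        = (if a p i ≠ 0 then a k p * y p else 0)
          + d * (if a p i ≠ 0 then a k p * w p else 0) := by
      intro p
      by_cases h : a p i ≠ 0
      · simp only [if_pos h]; ring
      · simp [h]
    simp only [hF]
    rw [tsum_congr h1, ENNReal.tsum_add, ENNReal.tsum_mul_left]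
    have h2 : (∑' p, (if a p i ≠ 0 then a k p * w p else 0)) = w k := L1 k
    rw [h2]
  have Lmono : ∀ (y z : ι → ℝ≥0∞), (∀ p, y p ≤ z p) → ∀ k, F y k ≤ F z k := by
    intro y z h k
    apply ENNReal.tsum_le_tsum
    intro p
    by_cases hp : a p i ≠ 0
    · simp only [if_pos hp]
      exact mul_le_mul_right (h p) _
    · simp [hp]
  have L3 : ∀ k, F x k + c * w k ≤ x k := by
    intro k
    have hsplit : ∀ p, (if a p i ≠ 0 then a k p * x p else 0)
        + (if p = j then a k p * a p m else 0) ≤ a k p * a p m := by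
      intro p
      by_cases hp : p = j
      · subst hp
        have hcond : ¬ (a p i ≠ 0) := by simp [hji]
        simp [hcond]
      · simp only [if_neg hp, add_zero, hx]
        by_cases hq : a p i ≠ 0
        · simp [hq]
        · simp [hq]
    have h2 : (∑' p, ((if a p i ≠ 0 then a k p * x p else 0)
        + (if p = j then a k p * a p m else 0))) ≤ ∑' p, a k p * a p m :=
      ENNReal.tsum_le_tsum hsplit
    rw [ENNReal.tsum_add] at h2
    have h3 : (∑' p, (if p = j then a k p * a p m else 0)) = a k j * a j m := by
      rw [tsum_eq_single j (fun b hb => by simp [hb])]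
      simp
    rw [h3, ha k m] at h2
    have h4 : a k i * a i j ≤ a k j := by
      have h5 := ENNReal.le_tsum (f := fun p => a k p * a p j) i
      rwa [ha k j] at h5
    refine le_trans (add_le_add_right ?_ _) h2
    calc c * w k = (a k i * a i j) * a j m := by rw [hc]; show _ = _ ; ring
    _ ≤ a k j * a j m := mul_le_mul_left h4 _
  have L5 : ∀ n : ℕ, ∀ k, F^[n] x k + (n : ℝ≥0∞) * (c * w k) ≤ x k := by
    intro n
    induction n with
    | zero => intro k; simp
    | succ n ih =>
      intro k
      have step1 : F (fun p => F^[n] x p + ((n : ℝ≥0∞) * c) * w p) k ≤ F x k := by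
        refine Lmono _ _ (fun p => ?_) k
        have := ih p
        rw [mul_assoc]
        exact this
      rw [Ladd] at step1
      rw [Function.iterate_succ_apply']
      push_cast
      calc F (F^[n] x) k + ((n : ℝ≥0∞) + 1) * (c * w k)
          = (F (F^[n] x) k + (n : ℝ≥0∞) * c * w k) + c * w k := by ring
        _ ≤ F x k + c * w k := add_le_add_left step1 _
        _ ≤ x k := L3 k
  have key : ∀ n : ℕ, (n : ℝ≥0∞) * (c * w k0) ≤ 1 := by
    intro n
    have h1 := L5 n k0
    exact le_trans (le_trans le_add_self h1) (hle k0 m)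
  have ht : c * w k0 ≠ 0 := mul_ne_zero hcne hk0
  have htle : c * w k0 ≤ 1 := by
    have := key 1
    simpa using this
  obtain ⟨n, hn⟩ := ENNReal.exists_inv_nat_lt ht
  have hn0 : (n : ℝ≥0∞) ≠ 0 := by
    intro h
    rw [h] at hn
    simp at hn
  have h1 : (1 : ℝ≥0∞) < (n : ℝ≥0∞) * (c * w k0) := by
    calc (1 : ℝ≥0∞) = (n : ℝ≥0∞) * (n : ℝ≥0∞)⁻¹ :=
          (ENNReal.mul_inv_cancel hn0 (ENNReal.natCast_ne_top n)).symm
    _ < (n : ℝ≥0∞) * (c * w k0) := by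
        exact ENNReal.mul_lt_mul_right hn0 (ENNReal.natCast_ne_top n) hn
  exact absurd (key n) (not_le.mpr h1)

lemma coeff_identity (U : SigmaSemiring UnitI)
    (hUzero : U.zero = uZero) (hUsum : U.sum = uSum) (hUmul : U.mul = uMul)
    {M ι : Type} (MM : SigmaModule UnitI U M)
    (e : ι → M) (φ : ι → M → UnitI) (hbasis : IsDualBasis U MM e φ)
    (k : ι) (x : M) :
    ((φ k x).1 : ℝ≥0∞) = ∑' i : ι, (((φ i x).1 : ℝ≥0∞) * ((φ k (e i)).1 : ℝ≥0∞)) := by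
  obtain ⟨emb, hsum⟩ := hbasis.2 x
  set f : ℕ → M := fun n => if h : ∃ i, emb i = n
      then MM.smul (φ h.choose x) (e h.choose) else MM.toSigmaMonoid.zero with hf
  have hlin := (hbasis.1 k).2.1 f x hsum
  rw [hUsum] at hlin
  unfold uSum at hlin
  set g : ℕ → ℝ≥0∞ := fun n => ((φ k (f n)).1 : ℝ≥0∞) with hg
  split_ifs at hlin with hcond
  have hval : (φ k x).1 = (∑' n, g n).toNNReal := by
    have h := Option.some.inj hlin
    rw [← h]
  have hne : (∑' n, g n) ≠ ⊤ := ne_top_of_le_ne_top ENNReal.one_ne_top hcond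
  have hcoe : ((φ k x).1 : ℝ≥0∞) = ∑' n, g n := by
    rw [hval, ENNReal.coe_toNNReal hne]
  rw [hcoe]
  have hinj : Function.Injective emb := emb.injective
  have hsupp : Function.support g ⊆ Set.range emb := by
    intro n hn
    by_contra hnr
    have h0 : f n = MM.toSigmaMonoid.zero := by
      rw [hf]
      have hne' : ¬ ∃ i, emb i = n := by
        intro ⟨i, hi⟩; exact hnr ⟨i, hi⟩
      simp [hne']
    have hz0 : g n = 0 := by
      rw [hg]
      simp only [h0]
      have hz : φ k MM.toSigmaMonoid.zero = U.zero := (hbasis.1 k).1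
      rw [hz, hUzero]
      simp [uZero]
    exact hn hz0
  rw [← hinj.tsum_eq hsupp]
  refine tsum_congr fun i => ?_
  have hmem : ∃ i', emb i' = emb i := ⟨i, rfl⟩
  have hchoose : hmem.choose = i := hinj hmem.choose_spec
  have hfi : f (emb i) = MM.smul (φ i x) (e i) := by
    rw [hf]
    simp only [dif_pos hmem]
    rw [hchoose]
  rw [hg]
  simp only [hfi]
  rw [(hbasis.1 k).2.2, hUmul]
  show (((uMul (φ i x) (φ k (e i))).1 : NNReal) : ℝ≥0∞) = _
  rw [show (uMul (φ i x) (φ k (e i))).1 = (φ i x).1 * (φ k (e i)).1 from rfl]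
  exact ENNReal.coe_mul _ _

lemma col_nonzero (U : SigmaSemiring UnitI)
    {M ι : Type} (MM : SigmaModule UnitI U M)
    (e : ι → M) (φ : ι → M → UnitI) (hbasis : IsDualBasis U MM e φ)
    (i : ι) (hei : e i ≠ MM.zero) :
    ∃ k, φ k (e i) ≠ U.zero := by
  by_contra hall
  push_neg at hall
  obtain ⟨emb, hsum⟩ := hbasis.2 (e i)
  have hz : ∀ n, (fun n => if h : ∃ i', emb i' = n
      then MM.smul (φ h.choose (e i)) (e h.choose) else MM.toSigmaMonoid.zero) n
      = MM.toSigmaMonoid.zero := by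
    intro n
    by_cases h : ∃ i', emb i' = n
    · simp only [dif_pos h]
      rw [hall h.choose]
      exact MM.zero_smul' _
    · simp [h]
  have h2 := MM.toSigmaMonoid.sum_unit _ 0 (fun n _ => hz n)
  rw [hsum] at h2
  exact hei ((Option.some.inj h2).trans (hz 0))

theorem stmt15_symm (U : SigmaSemiring UnitI)
    (hUzero : U.zero = uZero) (hUsum : U.sum = uSum) (hUmul : U.mul = uMul)
    {M ι : Type} (MM : SigmaModule UnitI U M)
    (e : ι → M) (φ : ι → M → UnitI) (hbasis : IsDualBasis U MM e φ)
    (he0 : ∀ i, e i ≠ MM.zero) (hφ0 : ∀ i, φ i ≠ fun _ => U.zero)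
    (i j : ι) (hij : φ i (e j) ≠ U.zero) : φ j (e i) ≠ U.zero := by
  let a : ι → ι → ℝ≥0∞ := fun k j => ((φ k (e j)).1 : ℝ≥0∞)
  have hne_iff : ∀ (k : ι) (y : M), φ k y ≠ U.zero ↔ ((φ k y).1 : ℝ≥0∞) ≠ 0 := by
    intro k y
    rw [hUzero]
    constructor
    · intro h h0
      exact h (Subtype.ext (by exact_mod_cast h0))
    · intro h h0
      exact h (by rw [h0]; rfl)
  have hle : ∀ k j, a k j ≤ 1 := by
    intro k j
    show ((φ k (e j)).1 : ℝ≥0∞) ≤ 1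
    exact_mod_cast (φ k (e j)).2
  have ha : ∀ k j, (∑' p, a k p * a p j) = a k j := by
    intro k j
    have h1 := coeff_identity U hUzero hUsum hUmul MM e φ hbasis k (e j)
    show (∑' p, ((φ k (e p)).1 : ℝ≥0∞) * ((φ p (e j)).1 : ℝ≥0∞))
        = ((φ k (e j)).1 : ℝ≥0∞)
    rw [h1]
    exact tsum_congr fun p => mul_comm _ _
  have hcol : ∃ k, a k i ≠ 0 := by
    obtain ⟨k, hk⟩ := col_nonzero U MM e φ hbasis i (he0 i)
    exact ⟨k, (hne_iff k (e i)).mp hk⟩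
  have hrow : ∃ m, a j m ≠ 0 := by
    by_contra hall
    push_neg at hall
    have hx : ∃ x, φ j x ≠ U.zero := by
      by_contra hx
      push_neg at hx
      exact hφ0 j (funext hx)
    obtain ⟨x, hxne⟩ := hx
    have h1 := coeff_identity U hUzero hUsum hUmul MM e φ hbasis j x
    have h2 : (∑' i : ι, (((φ i x).1 : ℝ≥0∞) * ((φ j (e i)).1 : ℝ≥0∞))) = 0 := by
      refine ENNReal.tsum_eq_zero.mpr fun p => ?_
      exact mul_eq_zero_of_right _ (hall p)
    rw [h2] at h1
    exact (hne_iff j x).mp hxne h1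
  have hsym := matrix_symm a hle ha i j ((hne_iff i (e j)).mp hij) hcol hrow
  exact (hne_iff j (e i)).mpr hsym

/-- In a `[0,1]`-module with a countable dual basis (with nonzero basis vectors
and nonzero coordinate functionals), the complement of a closed set of indices
is closed, where `J` is closed if `j ∈ J` and `φ_i(e_j) ≠ 0` imply `i ∈ J`. -/
theorem stmt15 (U : SigmaSemiring UnitI)
    (hUzero : U.zero = uZero) (hUone : U.one = uOne)
    (hUsum : U.sum = uSum) (hUmul : U.mul = uMul)
    {M ι : Type} [Countable ι]
    (MM : SigmaModule UnitI U M)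
    (e : ι → M) (φ : ι → M → UnitI)
    (hbasis : IsDualBasis U MM e φ)
    (he0 : ∀ i, e i ≠ MM.zero)
    (hφ0 : ∀ i, φ i ≠ fun _ => U.zero)
    (J : Set ι)
    (hJclosed : ∀ j ∈ J, ∀ i, φ i (e j) ≠ U.zero → i ∈ J) :
    ∀ j ∉ J, ∀ i, φ i (e j) ≠ U.zero → i ∉ J := by
  intro j hjJ i hij hiJ
  have hji : φ j (e i) ≠ U.zero :=
    stmt15_symm U hUzero hUsum hUmul MM e φ hbasis he0 hφ0 i j hij
  exact hjJ (hJclosed i hiJ j hji)
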